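/- The consecutive patterns 2120 and 2110 are reciprocal: for all n and all pairs of subsets S, T of [n], the number of inversion sequences e of length n with Em(2120, e) = S and Em(2110, e) = T equals the number with Em(2120, e) = T and Em(2110, e) = S. -/
import Mathlib


/-- Inversion sequences of length `n` (0-indexed: entry `i` lies in `Fin (i+1)`). -/
abbrev InvSeq (n : ℕ) := ∀ i : Fin n, Fin (i.val + 1)

/-- The entry of an inversion sequence at position `i`, as a natural number. -/
def ev {n : ℕ} (e : InvSeq n) (i : ℕ) : ℕ := if h : i < n then (e ⟨i, h⟩ : ℕ) else 0

/-- Positions of occurrences of the consecutive pattern 2120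
(`e i = e (i+2) > e (i+1) > e (i+3)`). -/
def Em2120 {n : ℕ} (e : InvSeq n) : Set ℕ :=
  {i | i + 3 < n ∧ ev e i = ev e (i+2) ∧ ev e (i+1) < ev e i ∧ ev e (i+3) < ev e (i+1)}

/-- Positions of occurrences of the consecutive pattern 2110
(`e i > e (i+1) = e (i+2) > e (i+3)`). -/
def Em2110 {n : ℕ} (e : InvSeq n) : Set ℕ :=
  {i | i + 3 < n ∧ ev e (i+1) < ev e i ∧ ev e (i+1) = ev e (i+2) ∧ ev e (i+3) < ev e (i+2)}

/-! ### Auxiliary occurrence predicates -/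

def isP (n : ℕ) (g : ℕ → ℕ) (i : ℕ) : Prop :=
  i + 3 < n ∧ g i = g (i+2) ∧ g (i+1) < g i ∧ g (i+3) < g (i+1)

def isQ (n : ℕ) (g : ℕ → ℕ) (i : ℕ) : Prop :=
  i + 3 < n ∧ g (i+1) < g i ∧ g (i+1) = g (i+2) ∧ g (i+3) < g (i+2)

lemma mem_Em2120 {n : ℕ} (e : InvSeq n) (i : ℕ) : i ∈ Em2120 e ↔ isP n (ev e) i := Iff.rfl

lemma mem_Em2110 {n : ℕ} (e : InvSeq n) (i : ℕ) : i ∈ Em2110 e ↔ isQ n (ev e) i := Iff.rfl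

lemma noPQ {n : ℕ} {g : ℕ → ℕ} {i : ℕ} (h1 : isP n g i) (h2 : isQ n g i) : False := by
  obtain ⟨-, a1, a2, -⟩ := h1; obtain ⟨-, b1, b2, -⟩ := h2; omega

lemma noAdj {n : ℕ} {g : ℕ → ℕ} {i : ℕ} (h1 : isP n g i ∨ isQ n g i)
    (h2 : isP n g (i+1) ∨ isQ n g (i+1)) : False := by
  simp only [isP, isQ, show i+1+1 = i+2 from rfl, show i+1+2 = i+3 from rfl,
    show i+1+3 = i+4 from rfl] at h1 h2
  omega

/-! ### The map on sequences -/

def Fmap (S T : Finset ℕ) (g : ℕ → ℕ) (j : ℕ) : ℕ :=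
  if h : 2 ≤ j then
    if j - 2 ∈ S then g (j-1)
    else if j - 2 ∈ T then Fmap S T g (j-2)
    else g j
  else g j
termination_by j
decreasing_by omega

lemma Fmap_small {S T : Finset ℕ} {g : ℕ → ℕ} {j : ℕ} (h : j < 2) : Fmap S T g j = g j := by
  rw [Fmap]; simp [Nat.not_le.mpr h]

lemma Fmap_memS {S T : Finset ℕ} {g : ℕ → ℕ} {q : ℕ} (h : q ∈ S) :
    Fmap S T g (q+2) = g (q+1) := by
  rw [Fmap]; simp [h]

lemma Fmap_memT {S T : Finset ℕ} {g : ℕ → ℕ} {q : ℕ} (hs : q ∉ S) (h : q ∈ T) :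
    Fmap S T g (q+2) = Fmap S T g q := by
  rw [Fmap]; simp [h, hs]

lemma Fmap_none {S T : Finset ℕ} {g : ℕ → ℕ} {q : ℕ} (hs : q ∉ S) (h : q ∉ T) :
    Fmap S T g (q+2) = g (q+2) := by
  rw [Fmap]; simp [h, hs]

lemma Fmap_le {S T : Finset ℕ} {g : ℕ → ℕ} (hg : ∀ j, g j ≤ j) : ∀ j, Fmap S T g j ≤ j := by
  intro j
  induction j using Nat.strong_induction_on with
  | _ j ih =>
    rw [Fmap]
    split_ifs with h1 h2 h3
    · have := hg (j-1); omega
    · have := ih (j-2) (by omega); omega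
    · exact hg j
    · exact hg j

lemma ev_le {n : ℕ} (e : InvSeq n) : ∀ j, ev e j ≤ j := by
  intro j; unfold ev; split
  · exact Nat.lt_succ_iff.mp (Fin.is_lt _)
  · exact Nat.zero_le _

/-- The bijection. -/
def phi {n : ℕ} (S T : Finset ℕ) (e : InvSeq n) : InvSeq n :=
  fun i => ⟨Fmap S T (ev e) i.val, Nat.lt_succ_of_le (Fmap_le (ev_le e) i.val)⟩

lemma ev_phi {n : ℕ} (S T : Finset ℕ) (e : InvSeq n) {j : ℕ} (h : j < n) :
    ev (phi S T e) j = Fmap S T (ev e) j := by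
  rw [ev, dif_pos h]; rfl

section Main

variable {n : ℕ} {S T : Finset ℕ} {e : InvSeq n}
  (hS : ∀ i ∈ S, isP n (ev e) i) (hT : ∀ i ∈ T, isQ n (ev e) i)

include hS hT

lemma memAdj {p : ℕ} (h1 : p ∈ S ∨ p ∈ T) (h2 : p + 1 ∈ S ∨ p + 1 ∈ T) : False :=
  noAdj (h1.imp (hS p) (hT p)) (h2.imp (hS _) (hT _))

lemma keyK : ∀ p, (p ∈ S ∨ p ∈ T) → ev e (p+1) < Fmap S T (ev e) p := by
  intro p
  induction p using Nat.strong_induction_on with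
  | _ p ih =>
    intro hp
    have hlow : ev e (p+1) < ev e p := hp.elim (fun h => (hS p h).2.2.1) (fun h => (hT p h).2.1)
    rcases Nat.lt_or_ge p 2 with h2 | h2
    · rw [Fmap_small h2]; exact hlow
    · obtain ⟨q, rfl⟩ : ∃ q, p = q + 2 := ⟨p - 2, by omega⟩
      by_cases hqS : q ∈ S
      · rw [Fmap_memS hqS]
        show ev e (q+3) < ev e (q+1)
        exact (hS q hqS).2.2.2
      · by_cases hqT : q ∈ T
        · rw [Fmap_memT hqS hqT]
          have h := hT q hqT
          have hih := ih q (by omega) (Or.inr hqT)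
          show ev e (q+3) < Fmap S T (ev e) q
          have e1 : ev e (q+3) < ev e (q+2) := h.2.2.2
          have e2 : ev e (q+1) = ev e (q+2) := h.2.2.1
          omega
        · rw [Fmap_none hqS hqT]; exact hlow

lemma phi_isP : ∀ p ∈ T, isP n (ev (phi S T e)) p := by
  intro p hpT
  obtain ⟨hn, h1, h2, h3⟩ := hT p hpT
  have hpS : p ∉ S := fun hpS => noPQ (hS p hpS) (hT p hpT)
  have hp1 : 1 ≤ p := by have := ev_le e p; omega
  obtain ⟨r, rfl⟩ : ∃ r, p = r + 1 := ⟨p - 1, by omega⟩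
  simp only [show r+1+1 = r+2 from rfl, show r+1+2 = r+3 from rfl,
    show r+1+3 = r+4 from rfl] at hn h1 h2 h3 ⊢
  have hrS : r ∉ S := fun h => memAdj hS hT (Or.inl h) (Or.inr hpT)
  have hrT : r ∉ T := fun h => memAdj hS hT (Or.inr h) (Or.inr hpT)
  have hr2S : r + 2 ∉ S := fun h => memAdj hS hT (Or.inr hpT) (Or.inl h)
  have hr2T : r + 2 ∉ T := fun h => memAdj hS hT (Or.inr hpT) (Or.inr h)
  have v1 : ev (phi S T e) (r+1) = Fmap S T (ev e) (r+1) := ev_phi _ _ _ (by omega)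
  have v2 : ev (phi S T e) (r+2) = ev e (r+2) := by
    rw [ev_phi _ _ _ (by omega)]; exact Fmap_none hrS hrT
  have v3 : ev (phi S T e) (r+3) = Fmap S T (ev e) (r+1) := by
    rw [ev_phi _ _ _ (by omega)]
    exact Fmap_memT hpS hpT
  have v4 : ev (phi S T e) (r+4) = ev e (r+4) := by
    rw [ev_phi _ _ _ (by omega)]
    exact Fmap_none hr2S hr2T
  have hK : ev e (r+2) < Fmap S T (ev e) (r+1) := keyK hS hT (r+1) (Or.inr hpT)
  refine ⟨by omega, ?_, ?_, ?_⟩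
  · rw [v1, v3]
  · rw [v1, v2]; exact hK
  · rw [v2, v4]; omega

lemma phi_isQ : ∀ p ∈ S, isQ n (ev (phi S T e)) p := by
  intro p hpS
  obtain ⟨hn, h1, h2, h3⟩ := hS p hpS
  have hp1 : 1 ≤ p := by have := ev_le e p; omega
  obtain ⟨r, rfl⟩ : ∃ r, p = r + 1 := ⟨p - 1, by omega⟩
  simp only [show r+1+1 = r+2 from rfl, show r+1+2 = r+3 from rfl,
    show r+1+3 = r+4 from rfl] at hn h1 h2 h3 ⊢
  have hrS : r ∉ S := fun h => memAdj hS hT (Or.inl h) (Or.inl hpS)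
  have hrT : r ∉ T := fun h => memAdj hS hT (Or.inr h) (Or.inl hpS)
  have hr2S : r + 2 ∉ S := fun h => memAdj hS hT (Or.inl hpS) (Or.inl h)
  have hr2T : r + 2 ∉ T := fun h => memAdj hS hT (Or.inl hpS) (Or.inr h)
  have v1 : ev (phi S T e) (r+1) = Fmap S T (ev e) (r+1) := ev_phi _ _ _ (by omega)
  have v2 : ev (phi S T e) (r+2) = ev e (r+2) := by
    rw [ev_phi _ _ _ (by omega)]; exact Fmap_none hrS hrT
  have v3 : ev (phi S T e) (r+3) = ev e (r+2) := by
    rw [ev_phi _ _ _ (by omega)]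
    exact Fmap_memS hpS
  have v4 : ev (phi S T e) (r+4) = ev e (r+4) := by
    rw [ev_phi _ _ _ (by omega)]
    exact Fmap_none hr2S hr2T
  have hK : ev e (r+2) < Fmap S T (ev e) (r+1) := keyK hS hT (r+1) (Or.inl hpS)
  refine ⟨by omega, ?_, ?_, ?_⟩
  · rw [v1, v2]; exact hK
  · rw [v2, v3]
  · rw [v3, v4]; omega

lemma phi_phi : ∀ j, j < n → Fmap T S (ev (phi S T e)) j = ev e j := by
  intro j
  induction j using Nat.strong_induction_on with
  | _ j ih =>
    intro hj
    rcases Nat.lt_or_ge j 2 with h2 | h2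
    · rw [Fmap_small h2, ev_phi _ _ _ hj, Fmap_small h2]
    · obtain ⟨q, rfl⟩ : ∃ q, j = q + 2 := ⟨j - 2, by omega⟩
      by_cases hqT : q ∈ T
      · rw [Fmap_memS hqT]
        obtain ⟨hn, h1, h2', h3⟩ := hT q hqT
        have hq1 : 1 ≤ q := by have := ev_le e q; omega
        obtain ⟨r, rfl⟩ : ∃ r, q = r + 1 := ⟨q - 1, by omega⟩
        have hrS : r ∉ S := fun h => memAdj hS hT (Or.inl h) (Or.inr hqT)
        have hrT : r ∉ T := fun h => memAdj hS hT (Or.inr h) (Or.inr hqT)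
        have : ev (phi S T e) (r+2) = ev e (r+2) := by
          rw [ev_phi _ _ _ (by omega)]; exact Fmap_none hrS hrT
        show ev (phi S T e) (r+2) = ev e (r+3)
        rw [this]
        exact h2'
      · by_cases hqS : q ∈ S
        · rw [Fmap_memT hqT hqS, ih q (by omega) (by omega)]
          exact (hS q hqS).2.1
        · rw [Fmap_none hqT hqS, ev_phi _ _ _ hj, Fmap_none hqS hqT]

lemma phi_phi_eq : phi T S (phi S T e) = e := by
  funext i
  apply Fin.ext
  have h := phi_phi hS hT i.val i.isLt
  show Fmap T S (ev (phi S T e)) i.val = (e i).val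
  rw [h]
  unfold ev
  rw [dif_pos i.isLt]

end Main

/-! ### Symmetry of the "superset" counts -/

lemma Ncard_symm (n : ℕ) (S T : Finset ℕ) :
    Nat.card {e : InvSeq n // ↑S ⊆ Em2120 e ∧ ↑T ⊆ Em2110 e} =
      Nat.card {e : InvSeq n // ↑T ⊆ Em2120 e ∧ ↑S ⊆ Em2110 e} := by
  apply Nat.card_congr
  have hget : ∀ (e : InvSeq n), (↑S ⊆ Em2120 e ∧ ↑T ⊆ Em2110 e) →
      (∀ i ∈ S, isP n (ev e) i) ∧ (∀ i ∈ T, isQ n (ev e) i) :=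
    fun e h => ⟨fun i hi => h.1 (Finset.mem_coe.mpr hi), fun i hi => h.2 (Finset.mem_coe.mpr hi)⟩
  have hget' : ∀ (e : InvSeq n), (↑T ⊆ Em2120 e ∧ ↑S ⊆ Em2110 e) →
      (∀ i ∈ T, isP n (ev e) i) ∧ (∀ i ∈ S, isQ n (ev e) i) :=
    fun e h => ⟨fun i hi => h.1 (Finset.mem_coe.mpr hi), fun i hi => h.2 (Finset.mem_coe.mpr hi)⟩
  refine ⟨fun x => ⟨phi S T x.1, ?_, ?_⟩, fun x => ⟨phi T S x.1, ?_, ?_⟩, ?_, ?_⟩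
  · exact fun i hi => phi_isP (hget x.1 x.2).1 (hget x.1 x.2).2 i (Finset.mem_coe.mp hi)
  · exact fun i hi => phi_isQ (hget x.1 x.2).1 (hget x.1 x.2).2 i (Finset.mem_coe.mp hi)
  · exact fun i hi => phi_isP (hget' x.1 x.2).1 (hget' x.1 x.2).2 i (Finset.mem_coe.mp hi)
  · exact fun i hi => phi_isQ (hget' x.1 x.2).1 (hget' x.1 x.2).2 i (Finset.mem_coe.mp hi)
  · intro x
    exact Subtype.ext (phi_phi_eq (hget x.1 x.2).1 (hget x.1 x.2).2)
  · intro x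
    exact Subtype.ext (phi_phi_eq (hget' x.1 x.2).1 (hget' x.1 x.2).2)

/-! ### Counting -/

noncomputable def Acard (n : ℕ) (S T : Finset ℕ) : ℕ :=
  Nat.card {e : InvSeq n // Em2120 e = ↑S ∧ Em2110 e = ↑T}

def em1 {n : ℕ} (e : InvSeq n) : Finset ℕ :=
  (Finset.range n).filter fun i =>
    i + 3 < n ∧ ev e i = ev e (i+2) ∧ ev e (i+1) < ev e i ∧ ev e (i+3) < ev e (i+1)

def em2 {n : ℕ} (e : InvSeq n) : Finset ℕ :=
  (Finset.range n).filter fun i =>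
    i + 3 < n ∧ ev e (i+1) < ev e i ∧ ev e (i+1) = ev e (i+2) ∧ ev e (i+3) < ev e (i+2)

lemma coe_em1 {n : ℕ} (e : InvSeq n) : (↑(em1 e) : Set ℕ) = Em2120 e := by
  ext i
  simp only [em1, Finset.coe_filter, Finset.mem_range, Set.mem_setOf_eq, Em2120]
  constructor
  · exact fun h => h.2
  · exact fun h => ⟨by omega, h⟩

lemma coe_em2 {n : ℕ} (e : InvSeq n) : (↑(em2 e) : Set ℕ) = Em2110 e := by
  ext i
  simp only [em2, Finset.coe_filter, Finset.mem_range, Set.mem_setOf_eq, Em2110]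
  constructor
  · exact fun h => h.2
  · exact fun h => ⟨by omega, h⟩

lemma Ncard_eq_sum (n : ℕ) (S T : Finset ℕ) :
    Nat.card {e : InvSeq n // ↑S ⊆ Em2120 e ∧ ↑T ⊆ Em2110 e} =
      ∑ p ∈ ((Finset.range n).powerset ×ˢ (Finset.range n).powerset).filter
          (fun p => S ⊆ p.1 ∧ T ⊆ p.2), Acard n p.1 p.2 := by
  classical
  rw [Nat.card_eq_fintype_card, Fintype.card_subtype]
  have H : ∀ x ∈ Finset.univ.filter (fun e : InvSeq n => ↑S ⊆ Em2120 e ∧ ↑T ⊆ Em2110 e),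
      (em1 x, em2 x) ∈ ((Finset.range n).powerset ×ˢ (Finset.range n).powerset).filter
        (fun p => S ⊆ p.1 ∧ T ⊆ p.2) := by
    intro x hx
    simp only [Finset.mem_filter, Finset.mem_univ, true_and] at hx
    simp only [Finset.mem_filter, Finset.mem_product, Finset.mem_powerset]
    refine ⟨⟨Finset.filter_subset _ _, Finset.filter_subset _ _⟩, ?_, ?_⟩
    · intro i hi
      have : i ∈ Em2120 x := hx.1 (Finset.mem_coe.mpr hi)
      rwa [← coe_em1, Finset.mem_coe] at this
    · intro i hi
      have : i ∈ Em2110 x := hx.2 (Finset.mem_coe.mpr hi)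
      rwa [← coe_em2, Finset.mem_coe] at this
  rw [Finset.card_eq_sum_card_fiberwise H]
  refine Finset.sum_congr rfl ?_
  rintro ⟨p1, p2⟩ hp
  simp only [Finset.mem_filter, Finset.mem_product, Finset.mem_powerset] at hp
  rw [Acard, Nat.card_eq_fintype_card, Fintype.card_subtype]
  congr 1
  ext x
  simp only [Finset.mem_filter, Finset.mem_univ, true_and, Prod.mk.injEq]
  constructor
  · rintro ⟨-, h1, h2⟩
    rw [← h1, ← h2, coe_em1, coe_em2]
    exact ⟨rfl, rfl⟩
  · rintro ⟨h1, h2⟩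
    have e1 : em1 x = p1 := Finset.coe_injective (by rw [coe_em1, h1])
    have e2 : em2 x = p2 := Finset.coe_injective (by rw [coe_em2, h2])
    refine ⟨⟨?_, ?_⟩, e1, e2⟩
    · rw [h1]; exact Finset.coe_subset.mpr hp.2.1
    · rw [h2]; exact Finset.coe_subset.mpr hp.2.2

lemma Acard_symm (n : ℕ) : ∀ (k : ℕ) (S T : Finset ℕ), S ⊆ Finset.range n →
    T ⊆ Finset.range n → 2 * n ≤ k + S.card + T.card → Acard n S T = Acard n T S := by
  intro k
  induction k with
  | zero =>
    intro S T hs ht hc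
    have h1 : S.card ≤ n := by
      have := Finset.card_le_card hs; rwa [Finset.card_range] at this
    have h2 : T.card ≤ n := by
      have := Finset.card_le_card ht; rwa [Finset.card_range] at this
    have e1 : S = Finset.range n :=
      Finset.eq_of_subset_of_card_le hs (by rw [Finset.card_range]; omega)
    have e2 : T = Finset.range n :=
      Finset.eq_of_subset_of_card_le ht (by rw [Finset.card_range]; omega)
    rw [e1, e2]
  | succ k ih =>
    intro S T hs ht hc
    classical
    have h1 := Ncard_eq_sum n S T
    have h2 := Ncard_eq_sum n T S
    have h3 := Ncard_symm n S T
    have hm1 : (S, T) ∈ ((Finset.range n).powerset ×ˢ (Finset.range n).powerset).filter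
        (fun p => S ⊆ p.1 ∧ T ⊆ p.2) := by
      simp only [Finset.mem_filter, Finset.mem_product, Finset.mem_powerset]
      exact ⟨⟨hs, ht⟩, Finset.Subset.refl _, Finset.Subset.refl _⟩
    have hm2 : (T, S) ∈ ((Finset.range n).powerset ×ˢ (Finset.range n).powerset).filter
        (fun p => T ⊆ p.1 ∧ S ⊆ p.2) := by
      simp only [Finset.mem_filter, Finset.mem_product, Finset.mem_powerset]
      exact ⟨⟨ht, hs⟩, Finset.Subset.refl _, Finset.Subset.refl _⟩
    rw [← Finset.sum_erase_add _ _ hm1] at h1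
    rw [← Finset.sum_erase_add _ _ hm2] at h2
    have hsum :
        (∑ p ∈ (((Finset.range n).powerset ×ˢ (Finset.range n).powerset).filter
            (fun p => S ⊆ p.1 ∧ T ⊆ p.2)).erase (S, T), Acard n p.1 p.2) =
        ∑ p ∈ (((Finset.range n).powerset ×ˢ (Finset.range n).powerset).filter
            (fun p => T ⊆ p.1 ∧ S ⊆ p.2)).erase (T, S), Acard n p.1 p.2 := by
      refine Finset.sum_nbij' (i := fun p => (p.2, p.1)) (j := fun p => (p.2, p.1))
        ?_ ?_ ?_ ?_ ?_
      · rintro ⟨p1, p2⟩ hp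
        obtain ⟨hne, hmem⟩ := Finset.mem_erase.mp hp
        obtain ⟨hprod, hc1, hc2⟩ := Finset.mem_filter.mp hmem
        obtain ⟨ha, hb⟩ := Finset.mem_product.mp hprod
        refine Finset.mem_erase.mpr ⟨?_, Finset.mem_filter.mpr
          ⟨Finset.mem_product.mpr ⟨hb, ha⟩, hc2, hc1⟩⟩
        intro h
        rw [Prod.mk.injEq] at h
        exact hne (by rw [show p1 = S from h.2, show p2 = T from h.1])
      · rintro ⟨p1, p2⟩ hp
        obtain ⟨hne, hmem⟩ := Finset.mem_erase.mp hp
        obtain ⟨hprod, hc1, hc2⟩ := Finset.mem_filter.mp hmem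
        obtain ⟨ha, hb⟩ := Finset.mem_product.mp hprod
        refine Finset.mem_erase.mpr ⟨?_, Finset.mem_filter.mpr
          ⟨Finset.mem_product.mpr ⟨hb, ha⟩, hc2, hc1⟩⟩
        intro h
        rw [Prod.mk.injEq] at h
        exact hne (by rw [show p1 = T from h.2, show p2 = S from h.1])
      · intro p _; rfl
      · intro p _; rfl
      · intro p hp
        simp only [Finset.mem_erase, Finset.mem_filter, Finset.mem_product,
          Finset.mem_powerset, Prod.ext_iff] at hp
        obtain ⟨hne, ⟨hp1, hp2⟩, hsp, htp⟩ := hp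
        have hca : S.card ≤ p.1.card := Finset.card_le_card hsp
        have hcb : T.card ≤ p.2.card := Finset.card_le_card htp
        have hstrict : S.card + T.card < p.1.card + p.2.card := by
          by_contra hcon
          push_neg at hcon
          have ea : S = p.1 := Finset.eq_of_subset_of_card_le hsp (by omega)
          have eb : T = p.2 := Finset.eq_of_subset_of_card_le htp (by omega)
          exact hne (by rw [Prod.ext_iff]; exact ⟨ea.symm, eb.symm⟩)
        exact ih p.1 p.2 hp1 hp2 (by omega)
    dsimp only at h1 h2
    omega
  
theorem reciprocal_2120_2110 (n : ℕ) (S T : Set ℕ) :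
    Nat.card {e : InvSeq n // Em2120 e = S ∧ Em2110 e = T} =
      Nat.card {e : InvSeq n // Em2120 e = T ∧ Em2110 e = S} := by
  classical
  by_cases hb : S ⊆ {i | i + 3 < n} ∧ T ⊆ {i | i + 3 < n}
  · obtain ⟨hbS, hbT⟩ := hb
    have hfin : ({i | i + 3 < n} : Set ℕ).Finite :=
      (Set.finite_Iio n).subset (fun i (hi : i + 3 < n) => Set.mem_Iio.mpr (by omega))
    have hSf : S.Finite := hfin.subset hbS
    have hTf : T.Finite := hfin.subset hbT
    have hS0 : (↑hSf.toFinset : Set ℕ) = S := hSf.coe_toFinset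
    have hT0 : (↑hTf.toFinset : Set ℕ) = T := hTf.coe_toFinset
    have hsubS : hSf.toFinset ⊆ Finset.range n := by
      intro i hi
      rw [Set.Finite.mem_toFinset] at hi
      have : i + 3 < n := hbS hi
      exact Finset.mem_range.mpr (by omega)
    have hsubT : hTf.toFinset ⊆ Finset.range n := by
      intro i hi
      rw [Set.Finite.mem_toFinset] at hi
      have : i + 3 < n := hbT hi
      exact Finset.mem_range.mpr (by omega)
    have := Acard_symm n (2 * n) hSf.toFinset hTf.toFinset hsubS hsubT (by omega)
    simp only [Acard] at this
    rwa [hS0, hT0] at this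
  · have key : ∀ (U V : Set ℕ), ¬(U ⊆ {i | i + 3 < n} ∧ V ⊆ {i | i + 3 < n}) →
        Nat.card {e : InvSeq n // Em2120 e = U ∧ Em2110 e = V} = 0 := by
      intro U V h
      rw [Nat.card_eq_zero]
      left
      refine ⟨fun x => h ⟨?_, ?_⟩⟩
      · rw [← x.2.1]; exact fun i hi => hi.1
      · rw [← x.2.2]; exact fun i hi => hi.1
    rw [key S T hb, key T S (fun h' => hb ⟨h'.2, h'.1⟩)]
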